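/- Let H be a real or complex Hilbert space, φ, ψ ∈ H with ‖φ‖ = ‖ψ‖ = 1, and let P be the orthogonal projection onto the orthogonal complement of φ. Then for every g ∈ H with ⟨g, ψ⟩ = 0, one has |⟨ψ, φ⟩| · ‖g‖ ≤ ‖P g‖. -/

import Mathlib

open scoped InnerProductSpace

/-- Let `H` be a real or complex Hilbert space, `φ, ψ ∈ H` with
`‖φ‖ = ‖ψ‖ = 1`, and let `P` be the orthogonal projection onto the orthogonal complement
of `φ`.  Then for every `g ∈ H` with `⟨g, ψ⟩ = 0`, one has `|⟨ψ, φ⟩| ⬝ ‖g‖ ≤ ‖P g‖`. -/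
theorem norm_inner_mul_norm_le_norm_orthogonalProjection
    {𝕜 H : Type*} [RCLike 𝕜] [NormedAddCommGroup H] [InnerProductSpace 𝕜 H]
    [CompleteSpace H] (φ ψ : H) (hφ : ‖φ‖ = 1) (hψ : ‖ψ‖ = 1)
    (g : H) (hg : ⟪g, ψ⟫_𝕜 = 0) :
    ‖⟪ψ, φ⟫_𝕜‖ * ‖g‖ ≤ ‖(Submodule.orthogonalProjectionOnto (𝕜 ∙ φ)ᗮ g : H)‖ := by
  set c : 𝕜 := ⟪φ, g⟫_𝕜 with hc
  set d : 𝕜 := ⟪φ, ψ⟫_𝕜 with hd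
  set p : H := (Submodule.orthogonalProjectionOnto (𝕜 ∙ φ)ᗮ g : H) with hpdef
  set q : H := (Submodule.orthogonalProjectionOnto (𝕜 ∙ φ)ᗮ ψ : H) with hqdef
  have hp : p ∈ (𝕜 ∙ φ)ᗮ := (Submodule.orthogonalProjectionOnto (𝕜 ∙ φ)ᗮ g).2
  have hq : q ∈ (𝕜 ∙ φ)ᗮ := (Submodule.orthogonalProjectionOnto (𝕜 ∙ φ)ᗮ ψ).2
  have hφp : ⟪φ, p⟫_𝕜 = 0 :=
    Submodule.inner_right_of_mem_orthogonal (Submodule.mem_span_singleton_self φ) hp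
  have hφq : ⟪φ, q⟫_𝕜 = 0 :=
    Submodule.inner_right_of_mem_orthogonal (Submodule.mem_span_singleton_self φ) hq
  have hsing : ∀ w : H, (Submodule.orthogonalProjectionOnto (𝕜 ∙ φ) w : H) = ⟪φ, w⟫_𝕜 • φ := by
    intro w
    change (𝕜 ∙ φ).starProjection w = _
    rw [Submodule.starProjection_singleton, hφ]
    norm_num
  have hgd : c • φ + p = g := by
    rw [← hsing g]
    exact Submodule.starProjection_add_starProjection_orthogonal (K := 𝕜 ∙ φ) g
  have hψd : d • φ + q = ψ := by
    rw [← hsing ψ]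
    exact Submodule.starProjection_add_starProjection_orthogonal (K := 𝕜 ∙ φ) ψ
  have hφφ : ⟪φ, φ⟫_𝕜 = 1 := by
    rw [inner_self_eq_norm_sq_to_K, hφ]; norm_num
  have hpφ : ⟪p, φ⟫_𝕜 = 0 := by
    rw [← inner_conj_symm, hφp, map_zero]
  -- cross term
  have hcross : ⟪p, q⟫_𝕜 = -((starRingEnd 𝕜) c * d) := by
    have h0 : (0 : 𝕜) = ⟪c • φ + p, d • φ + q⟫_𝕜 := by rw [hgd, hψd, hg]
    simp only [inner_add_left, inner_add_right, inner_smul_left, inner_smul_right,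
      hφφ, hφp, hφq, hpφ, mul_zero, mul_one, zero_add, add_zero] at h0
    linear_combination -h0
  have hct : ‖c‖ * ‖d‖ ≤ ‖p‖ * ‖q‖ := by
    have := norm_inner_le_norm (𝕜 := 𝕜) p q
    rw [hcross] at this
    simpa using this
  have hg2 : ‖g‖ ^ 2 = ‖c‖ ^ 2 + ‖p‖ ^ 2 := by
    have h := norm_add_sq_eq_norm_sq_add_norm_sq_of_inner_eq_zero (c • φ) p
      (by rw [inner_smul_left, hφp, mul_zero])
    rw [hgd, norm_smul, hφ, mul_one] at h
    nlinarith [h]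
  have hψ2 : (1 : ℝ) = ‖d‖ ^ 2 + ‖q‖ ^ 2 := by
    have h := norm_add_sq_eq_norm_sq_add_norm_sq_of_inner_eq_zero (d • φ) q
      (by rw [inner_smul_left, hφq, mul_zero])
    rw [hψd, hψ, norm_smul, hφ, mul_one] at h
    nlinarith [h]
  have hdn : ‖⟪ψ, φ⟫_𝕜‖ = ‖d‖ := by
    rw [hd, ← inner_conj_symm φ ψ, RCLike.norm_conj]
  rw [hdn]
  have hdnn : 0 ≤ ‖d‖ := norm_nonneg d
  have hq2 : ‖q‖ ^ 2 = 1 - ‖d‖ ^ 2 := by linarith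
  have h2 : (‖c‖ * ‖d‖) ^ 2 ≤ (‖p‖ * ‖q‖) ^ 2 :=
    pow_le_pow_left₀ (by positivity) hct 2
  have key : (‖d‖ * ‖g‖) ^ 2 ≤ ‖p‖ ^ 2 := by nlinarith [sq_nonneg ‖p‖, sq_nonneg ‖d‖]
  have h1 : 0 ≤ ‖d‖ * ‖g‖ := by positivity
  exact (pow_le_pow_iff_left₀ h1 (norm_nonneg p) two_ne_zero).1 key
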